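/- For nullspace consistent tensor product SBP operators in two dimensions, the vectors (osc₁₂, 0) and (0, osc₁₂), with osc₁₂ = osc_x⊗osc_y, are M-orthogonal to both im grad and im rot; hence im grad + im rot ≠ ℝ^{N₁N₂} × ℝ^{N₁N₂}, so a discrete Helmholtz decomposition u = grad φ + rot v is impossible in general. -/

import Mathlib

open Matrix Kronecker

private lemma kron_mulVec {m n p q : Type*} [Fintype n] [Fintype q]
    (A : Matrix m n ℝ) (B : Matrix p q ℝ) (f : n → ℝ) (g : q → ℝ) :
    (A ⊗ₖ B).mulVec (fun x => f x.1 * g x.2) =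
      fun x => A.mulVec f x.1 * B.mulVec g x.2 := by
  funext x
  simp only [Matrix.mulVec, dotProduct, Matrix.kroneckerMap_apply,
    Fintype.sum_prod_type, Finset.sum_mul_sum]
  exact Finset.sum_congr rfl fun j _ => Finset.sum_congr rfl fun k _ => by ring

private lemma kron_dot {n q : Type*} [Fintype n] [Fintype q]
    (f f' : n → ℝ) (g g' : q → ℝ) :
    (fun x : n × q => f x.1 * g x.2) ⬝ᵥ (fun x => f' x.1 * g' x.2) =
      (f ⬝ᵥ f') * (g ⬝ᵥ g') := by
  simp only [dotProduct, Fintype.sum_prod_type, Finset.sum_mul_sum]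
  exact Finset.sum_congr rfl fun j _ => Finset.sum_congr rfl fun k _ => by ring

/-- 1D fact: `Dᵀ (M osc) = 0`. -/
private lemma osc_adjoint {N : ℕ} (D M : Matrix (Fin N) (Fin N) ℝ) (hM : M.PosDef)
    (osc : Fin N → ℝ)
    (hosc : LinearMap.ker (M⁻¹ * Dᵀ * M).mulVecLin = Submodule.span ℝ {osc}) :
    Dᵀ.mulVec (M.mulVec osc) = 0 := by
  have hmem : osc ∈ LinearMap.ker (M⁻¹ * Dᵀ * M).mulVecLin := by
    rw [hosc]; exact Submodule.mem_span_singleton_self osc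
  have h0 : (M⁻¹ * Dᵀ * M).mulVec osc = 0 := hmem
  have h1 := congrArg (M.mulVec) h0
  rwa [Matrix.mulVec_mulVec, mul_assoc, Matrix.mul_nonsing_inv_cancel_left _ _
      hM.det_pos.ne'.isUnit, ← Matrix.mulVec_mulVec, Matrix.mulVec_zero] at h1

/-- 1D fact: `osc ≠ 0`. -/
private lemma osc_ne_zero {N : ℕ} (hN : 1 ≤ N) (D M : Matrix (Fin N) (Fin N) ℝ)
    (hM : M.PosDef)
    (hD : LinearMap.ker D.mulVecLin = Submodule.span ℝ {(fun _ => 1 : Fin N → ℝ)})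
    (osc : Fin N → ℝ)
    (hosc : LinearMap.ker (M⁻¹ * Dᵀ * M).mulVecLin = Submodule.span ℝ {osc}) :
    osc ≠ 0 := by
  intro h
  have hker : LinearMap.ker (M⁻¹ * Dᵀ * M).mulVecLin = ⊥ := by
    rw [hosc, h, Submodule.span_zero_singleton]
  have hinj : Function.Injective ((M⁻¹ * Dᵀ * M).mulVec) := by
    have := LinearMap.ker_eq_bot.mp hker
    exact this
  have hA : IsUnit (M⁻¹ * Dᵀ * M) := Matrix.mulVec_injective_iff_isUnit.mp hinj
  have hdet : IsUnit M.det := hM.det_pos.ne'.isUnit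
  have hDt : IsUnit Dᵀ := by
    have hrw : Dᵀ = M * (M⁻¹ * Dᵀ * M) * M⁻¹ := by
      rw [← mul_assoc, Matrix.mul_nonsing_inv_cancel_left _ _ hdet,
        Matrix.mul_nonsing_inv_cancel_right _ _ hdet]
    rw [hrw]
    exact (hM.isUnit.mul hA).mul ((Matrix.isUnit_nonsing_inv_iff).mpr hM.isUnit)
  have hDu : IsUnit D := (Matrix.isUnit_transpose D).mp hDt
  have hDinj : Function.Injective (D.mulVec) := Matrix.mulVec_injective_iff_isUnit.mpr hDu
  have hone : (fun _ => 1 : Fin N → ℝ) ∈ LinearMap.ker D.mulVecLin := by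
    rw [hD]; exact Submodule.mem_span_singleton_self _
  have h1 : D.mulVec (fun _ => 1) = D.mulVec 0 := by
    rw [Matrix.mulVec_zero]; exact hone
  have h01 : (1 : ℝ) = 0 := congrFun (hDinj h1) ⟨0, hN⟩
  norm_num at h01

/-- For nullspace consistent tensor product SBP operators in two dimensions, the vectors
`(osc₁₂, 0)` and `(0, osc₁₂)`, with `osc₁₂ = osc_x ⊗ osc_y`, are `M`-orthogonal to both
`im grad` and `im rot`; hence `im grad + im rot ≠ ℝ^{N₁N₂} × ℝ^{N₁N₂}`, so a discrete
Helmholtz decomposition `u = grad φ + rot v` is impossible in general. -/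
theorem discrete_helmholtz_impossible_2D (N₁ N₂ : ℕ) (hN₁ : 1 ≤ N₁) (hN₂ : 1 ≤ N₂)
    (Dx Mx : Matrix (Fin N₁) (Fin N₁) ℝ) (Dy My : Matrix (Fin N₂) (Fin N₂) ℝ)
    (hMx : Mx.PosDef) (hMxsym : Mx.IsSymm) (hMy : My.PosDef) (hMysym : My.IsSymm)
    (hDx : LinearMap.ker Dx.mulVecLin = Submodule.span ℝ {(fun _ => 1 : Fin N₁ → ℝ)})
    (hDy : LinearMap.ker Dy.mulVecLin = Submodule.span ℝ {(fun _ => 1 : Fin N₂ → ℝ)})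
    (oscx : Fin N₁ → ℝ) (oscy : Fin N₂ → ℝ)
    (hoscx : LinearMap.ker (Mx⁻¹ * Dxᵀ * Mx).mulVecLin = Submodule.span ℝ {oscx})
    (hoscy : LinearMap.ker (My⁻¹ * Dyᵀ * My).mulVecLin = Submodule.span ℝ {oscy})
    (D₁ D₂ : Matrix (Fin N₁ × Fin N₂) (Fin N₁ × Fin N₂) ℝ)
    (hD₁ : D₁ = Dx ⊗ₖ (1 : Matrix (Fin N₂) (Fin N₂) ℝ))
    (hD₂ : D₂ = (1 : Matrix (Fin N₁) (Fin N₁) ℝ) ⊗ₖ Dy)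
    (grad : (Fin N₁ × Fin N₂ → ℝ) →ₗ[ℝ] (Fin N₁ × Fin N₂ → ℝ) × (Fin N₁ × Fin N₂ → ℝ))
    (hgrad : grad = LinearMap.prod D₁.mulVecLin D₂.mulVecLin)
    (rot : (Fin N₁ × Fin N₂ → ℝ) →ₗ[ℝ] (Fin N₁ × Fin N₂ → ℝ) × (Fin N₁ × Fin N₂ → ℝ))
    (hrot : rot = LinearMap.prod D₂.mulVecLin (-D₁.mulVecLin))
    (osc₁₂ : Fin N₁ × Fin N₂ → ℝ) (hosc₁₂ : osc₁₂ = fun p => oscx p.1 * oscy p.2) :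
    (∀ u ∈ LinearMap.range grad ⊔ LinearMap.range rot,
      u.1 ⬝ᵥ (Mx ⊗ₖ My).mulVec osc₁₂ = 0 ∧ u.2 ⬝ᵥ (Mx ⊗ₖ My).mulVec osc₁₂ = 0) ∧
    ∃ u : (Fin N₁ × Fin N₂ → ℝ) × (Fin N₁ × Fin N₂ → ℝ),
      u ∉ LinearMap.range grad ⊔ LinearMap.range rot := by
  set m : Fin N₁ × Fin N₂ → ℝ := (Mx ⊗ₖ My).mulVec osc₁₂ with hm
  have hmsplit : m = fun p => Mx.mulVec oscx p.1 * My.mulVec oscy p.2 := by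
    rw [hm, hosc₁₂, kron_mulVec]
  have hx0 : Dxᵀ.mulVec (Mx.mulVec oscx) = 0 := osc_adjoint Dx Mx hMx oscx hoscx
  have hy0 : Dyᵀ.mulVec (My.mulVec oscy) = 0 := osc_adjoint Dy My hMy oscy hoscy
  -- both D₁ᵀ and D₂ᵀ annihilate m
  have hD₁m : D₁ᵀ.mulVec m = 0 := by
    rw [hD₁, ← Matrix.kroneckerMap_transpose, Matrix.transpose_one, hmsplit, kron_mulVec]
    funext p
    simp [hx0]
  have hD₂m : D₂ᵀ.mulVec m = 0 := by
    rw [hD₂, ← Matrix.kroneckerMap_transpose, Matrix.transpose_one, hmsplit, kron_mulVec]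
    funext p
    simp [hy0]
  have key1 : ∀ w : Fin N₁ × Fin N₂ → ℝ, D₁.mulVec w ⬝ᵥ m = 0 := by
    intro w
    rw [dotProduct_comm, Matrix.dotProduct_mulVec, ← Matrix.mulVec_transpose,
      hD₁m, zero_dotProduct]
  have key2 : ∀ w : Fin N₁ × Fin N₂ → ℝ, D₂.mulVec w ⬝ᵥ m = 0 := by
    intro w
    rw [dotProduct_comm, Matrix.dotProduct_mulVec, ← Matrix.mulVec_transpose,
      hD₂m, zero_dotProduct]
  have horth : ∀ u ∈ LinearMap.range grad ⊔ LinearMap.range rot,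
      u.1 ⬝ᵥ m = 0 ∧ u.2 ⬝ᵥ m = 0 := by
    intro u hu
    rcases Submodule.mem_sup.mp hu with ⟨y, hy, z, hz, rfl⟩
    rcases hy with ⟨φ, rfl⟩
    rcases hz with ⟨ψ, rfl⟩
    subst hgrad hrot
    constructor
    · show (D₁.mulVec φ + D₂.mulVec ψ) ⬝ᵥ m = 0
      rw [add_dotProduct, key1, key2, add_zero]
    · show (D₂.mulVec φ + (-(D₁.mulVec ψ))) ⬝ᵥ m = 0
      rw [add_dotProduct, neg_dotProduct, key1, key2, neg_zero, add_zero]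
  refine ⟨horth, ⟨(osc₁₂, 0), fun hmem => ?_⟩⟩
  have h0 : osc₁₂ ⬝ᵥ m = 0 := (horth _ hmem).1
  have hxne : oscx ≠ 0 := osc_ne_zero hN₁ Dx Mx hMx hDx oscx hoscx
  have hyne : oscy ≠ 0 := osc_ne_zero hN₂ Dy My hMy hDy oscy hoscy
  have hxpos : 0 < oscx ⬝ᵥ Mx.mulVec oscx := by
    have := hMx.dotProduct_mulVec_pos hxne
    simpa using this
  have hypos : 0 < oscy ⬝ᵥ My.mulVec oscy := by
    have := hMy.dotProduct_mulVec_pos hyne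
    simpa using this
  have hval : osc₁₂ ⬝ᵥ m = (oscx ⬝ᵥ Mx.mulVec oscx) * (oscy ⬝ᵥ My.mulVec oscy) := by
    rw [hosc₁₂, hmsplit, kron_dot]
  rw [hval] at h0
  exact absurd h0 (ne_of_gt (mul_pos hxpos hypos))
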